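/- Fix n ∈ ℕ₊ and 0 < p_tot ≤ 1. Among all random variables X = max(X₁, ..., Xₙ) with Xᵢ ~ geom(pᵢ) independent, 0 < pᵢ ≤ 1, and ∏ᵢ pᵢ = p_tot, the choice with all pᵢ equal to p_tot^{1/n} (the homogeneous case X_hom) is stochastically dominated by every other member: X ≥_st X_hom for all such X. -/

import Mathlib

open Real Finset Set

lemma geomS_pos (k : ℕ) (hk : 1 ≤ k) {t : ℝ} (ht : 0 ≤ t) :
    0 < ∑ j ∈ Finset.range k, t ^ j := by
  have : (1:ℝ) ≤ ∑ j ∈ Finset.range k, t ^ j := by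
    calc (1:ℝ) = ∑ j ∈ Finset.range 1, t ^ j := by simp
    _ ≤ _ := Finset.sum_le_sum_of_subset_of_nonneg
        (Finset.range_subset_range.2 hk) (fun j _ _ => pow_nonneg ht j)
  linarith

lemma one_sub_pow_eq (k : ℕ) (t : ℝ) :
    1 - t ^ k = (1 - t) * ∑ j ∈ Finset.range k, t ^ j := by
  have := geom_sum_mul t k
  nlinarith [this]

lemma key_mono (k : ℕ) (hk : 1 ≤ k) {s t : ℝ} (hs : 0 ≤ s) (hst : s ≤ t) :
    s ^ (k-1) * ∑ j ∈ Finset.range k, t ^ j ≤ t ^ (k-1) * ∑ j ∈ Finset.range k, s ^ j := by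
  have ht : 0 ≤ t := hs.trans hst
  rw [Finset.mul_sum, Finset.mul_sum]
  apply Finset.sum_le_sum
  intro j hj
  have hj' := Finset.mem_range.mp hj
  obtain ⟨m, hm⟩ : ∃ m, k - 1 = j + m := ⟨k - 1 - j, by omega⟩
  calc s ^ (k-1) * t ^ j = s ^ j * t ^ j * s ^ m := by rw [hm, pow_add]; ring
  _ ≤ s ^ j * t ^ j * t ^ m := by
      apply mul_le_mul_of_nonneg_left (pow_le_pow_left₀ hs hst _)
      positivity
  _ = t ^ (k-1) * s ^ j := by rw [hm, pow_add]; ring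

lemma hasDeriv_f (k : ℕ) (hk : 1 ≤ k) {x : ℝ} (hx : x < 0) :
    HasDerivAt (fun x => Real.log (1 - (1 - Real.exp x)^k))
      ((k : ℝ) * (1 - Real.exp x)^(k-1) * Real.exp x / (1 - (1 - Real.exp x)^k)) x := by
  have hex : Real.exp x < 1 := by
    rw [← Real.exp_zero]; exact Real.exp_lt_exp.2 hx
  have ht0 : 0 ≤ 1 - Real.exp x := by linarith
  have ht1 : 1 - Real.exp x < 1 := by have := Real.exp_pos x; linarith
  have hne : 1 - (1 - Real.exp x)^k ≠ 0 := by
    have := pow_lt_one₀ ht0 ht1 (by omega : k ≠ 0)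
    intro h; linarith
  have h1 : HasDerivAt (fun x => 1 - Real.exp x) (-Real.exp x) x :=
    (Real.hasDerivAt_exp x).const_sub 1
  have h2 := h1.pow k
  have h3 := h2.const_sub 1
  have h4 := h3.log hne
  convert h4 using 1
  · rfl
  · simp only [Pi.pow_apply]; ring

lemma f_concave (k : ℕ) (hk : 1 ≤ k) :
    ConcaveOn ℝ (Set.Iic (0:ℝ)) (fun x => Real.log (1 - (1 - Real.exp x)^k)) := by
  have harg : ∀ x ∈ Set.Iic (0:ℝ), (0:ℝ) < 1 - (1 - Real.exp x)^k := by
    intro x hx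
    have hex : Real.exp x ≤ 1 := Real.exp_le_one_iff.mpr hx
    have := Real.exp_pos x
    have : (1 - Real.exp x)^k < 1 := pow_lt_one₀ (by linarith) (by linarith) (by omega)
    linarith
  apply AntitoneOn.concaveOn_of_deriv (convex_Iic 0)
  · apply ContinuousOn.log
    · exact (continuous_const.sub ((continuous_const.sub Real.continuous_exp).pow k)).continuousOn
    · exact fun x hx => (harg x hx).ne'
  · rw [interior_Iic]
    exact fun x hx => ((hasDeriv_f k hk hx).differentiableAt).differentiableWithinAt
  · rw [interior_Iic]
    intro x hx y hy hxy
    rw [(hasDeriv_f k hk hx).deriv, (hasDeriv_f k hk hy).deriv]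
    have hexx : Real.exp x < 1 := by rw [← Real.exp_zero]; exact Real.exp_lt_exp.2 hx
    have hexy : Real.exp y < 1 := by rw [← Real.exp_zero]; exact Real.exp_lt_exp.2 hy
    set t := 1 - Real.exp x with hht
    set s := 1 - Real.exp y with hhs
    have hs0 : 0 < s := by rw [hhs]; linarith
    have ht0 : 0 < t := by rw [hht]; linarith
    have hst : s ≤ t := by
      have : Real.exp x ≤ Real.exp y := Real.exp_le_exp.2 hxy
      rw [hhs, hht]; linarith
    have hs1 : s < 1 := by have := Real.exp_pos y; rw [hhs]; linarith
    have ht1 : t < 1 := by have := Real.exp_pos x; rw [hht]; linarith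
    have hex : Real.exp x = 1 - t := by rw [hht]; ring
    have hey : Real.exp y = 1 - s := by rw [hhs]; ring
    have hSs := geomS_pos k hk hs0.le
    have hSt := geomS_pos k hk ht0.le
    rw [hex, hey, one_sub_pow_eq k s, one_sub_pow_eq k t]
    rw [show (k:ℝ) * s^(k-1) * (1-s) / ((1-s) * ∑ j ∈ Finset.range k, s ^ j)
          = (k:ℝ) * s^(k-1) / ∑ j ∈ Finset.range k, s ^ j by
        have h1 : (1:ℝ) - s ≠ 0 := by linarith
        rw [mul_comm (1-s) (∑ j ∈ Finset.range k, s ^ j)]; exact mul_div_mul_right _ _ h1]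
    rw [show (k:ℝ) * t^(k-1) * (1-t) / ((1-t) * ∑ j ∈ Finset.range k, t ^ j)
          = (k:ℝ) * t^(k-1) / ∑ j ∈ Finset.range k, t ^ j by
        have h1 : (1:ℝ) - t ≠ 0 := by linarith
        rw [mul_comm (1-t) (∑ j ∈ Finset.range k, t ^ j)]; exact mul_div_mul_right _ _ h1]
    rw [div_le_div_iff₀ hSs hSt]
    have := key_mono k hk hs0.le hst
    nlinarith [(Nat.one_le_cast (α := ℝ)).mpr hk]

/-- Among maxima of `n` independent geometric random variables with success
probabilities `pᵢ ∈ (0,1]` of fixed product `p_tot`, the homogeneous choice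
`pᵢ = p_tot^(1/n)` is stochastically dominated by every member of the family:
its CDF `(1 - (1 - p_tot^(1/n))^k)^n` is pointwise largest. -/
theorem hom_dominates
    {n : ℕ} (hn : 0 < n) (ptot : ℝ) (h1 : 0 < ptot) (h2 : ptot ≤ 1)
    (p : Fin n → ℝ) (hp : ∀ i, 0 < p i) (hp1 : ∀ i, p i ≤ 1)
    (hprod : ∏ i, p i = ptot) (k : ℕ) :
    ∏ i, (1 - (1 - p i) ^ k) ≤ (1 - (1 - ptot ^ ((n : ℝ)⁻¹)) ^ k) ^ n := by
  rcases Nat.eq_zero_or_pos k with hk0 | hk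
  · subst hk0; simp
  have hnR : (0:ℝ) < n := Nat.cast_pos.mpr hn
  set q := ptot ^ ((n : ℝ)⁻¹) with hq
  have hq0 : 0 < q := Real.rpow_pos_of_pos h1 _
  have hq1 : q ≤ 1 := Real.rpow_le_one h1.le h2 (by positivity)
  have hlogq : Real.log q = (n:ℝ)⁻¹ * Real.log ptot := Real.log_rpow h1 _
  have gpos : ∀ i, (0:ℝ) < 1 - (1 - p i)^k := by
    intro i
    have h3 := hp i; have h4 := hp1 i
    have : (1 - p i)^k < 1 := pow_lt_one₀ (by linarith) (by linarith) (by omega)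
    linarith
  have gqpos : (0:ℝ) < 1 - (1 - q)^k := by
    have : (1 - q)^k < 1 := pow_lt_one₀ (by linarith) (by linarith) (by omega)
    linarith
  have hcn := f_concave k hk
  have hjensen := hcn.le_map_sum (t := Finset.univ) (w := fun _ : Fin n => (n:ℝ)⁻¹)
    (p := fun i => Real.log (p i))
    (fun i _ => by positivity)
    (by simp [Finset.card_univ]; field_simp)
    (fun i _ => Real.log_nonpos (hp i).le (hp1 i))
  have harg : ∑ i : Fin n, (n:ℝ)⁻¹ • Real.log (p i) = Real.log q := by
    simp only [smul_eq_mul]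
    rw [← Finset.mul_sum, ← Real.log_prod (fun i _ => (hp i).ne'), hprod, hlogq]
  rw [harg] at hjensen
  simp only [smul_eq_mul, Real.exp_log (hp _)] at hjensen
  rw [Real.exp_log hq0, ← Finset.mul_sum] at hjensen
  have hsum : ∑ i : Fin n, Real.log (1 - (1 - p i)^k) ≤ n * Real.log (1 - (1 - q)^k) := by
    rw [← div_le_iff₀' hnR] at *
    rw [div_eq_inv_mul]
    exact hjensen
  have := Real.exp_le_exp.mpr hsum
  rw [Real.exp_sum, Real.exp_nat_mul, Real.exp_log gqpos] at this
  simpa only [Real.exp_log (gpos _)] using this
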